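/- Let k ≥ 1 be an integer and let c : ℤ → ℤ be the coefficient function of the symmetrized Alexander polynomial of the pretzel knot P(-2,3,4k+1), and for j ≥ 0 define the torsion coefficient t(j) = Σ_{n ≥ 1} n · c(j+n). Then t(j) = k + 1 − ⌊(j+1)/2⌋ for 0 ≤ j ≤ 2k, t(2k+1) = 1, and t(j) = 0 for all j ≥ 2k+2. -/

import Mathlib

section auxP
variable (k : ℕ) (c : ℤ → ℤ)

noncomputable def TTaux (j : ℤ) : ℤ := ∑ n ∈ Finset.Icc (1:ℤ) (2*(k:ℤ)+2 - j), n * c (j + n)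
noncomputable def UUaux (j : ℤ) : ℤ := ∑ n ∈ Finset.Icc (1:ℤ) (2*(k:ℤ)+2 - j), c (j + n)
def FFaux (j : ℤ) : ℤ :=
  if j = 2*(k:ℤ)+1 then 1 else if j = 2*(k:ℤ)+2 then 0 else (k:ℤ)+1 - (j+1)/2
def GGaux (j : ℤ) : ℤ :=
  if j = 2*(k:ℤ)+1 then 1 else if j = 2*(k:ℤ)+2 then 0
  else if j = 2*(k:ℤ) then 0 else if j % 2 = 0 then 1 else 0

lemma shift_sum (f : ℤ → ℤ) (a b : ℤ) :
    ∑ n ∈ Finset.Icc (a+1) (b+1), f n = ∑ n ∈ Finset.Icc a b, f (n+1) := by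
  rw [← Finset.map_add_right_Icc a b 1, Finset.sum_map]
  rfl

lemma UU_rec (j : ℤ) (hj : j ≤ 2*(k:ℤ)+1) :
    UUaux k c j = UUaux k c (j+1) + c (j+1) := by
  unfold UUaux
  have h1 : Finset.Icc (1:ℤ) (2*(k:ℤ)+2-j) = insert 1 (Finset.Icc 2 (2*(k:ℤ)+2-j)) := by
    ext x; simp only [Finset.mem_Icc, Finset.mem_insert]; omega
  have h2 : Finset.Icc (2:ℤ) (2*(k:ℤ)+2-j) = Finset.Icc (1+1) ((2*(k:ℤ)+2-(j+1))+1) := by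
    congr 1; ring
  rw [h1, Finset.sum_insert (by simp), h2, shift_sum, add_comm]
  congr 1
  apply Finset.sum_congr rfl
  intro n _
  congr 1; ring

lemma TT_rec (j : ℤ) (hj : j ≤ 2*(k:ℤ)+1) :
    TTaux k c j = TTaux k c (j+1) + UUaux k c (j+1) + c (j+1) := by
  unfold TTaux UUaux
  have h1 : Finset.Icc (1:ℤ) (2*(k:ℤ)+2-j) = insert 1 (Finset.Icc 2 (2*(k:ℤ)+2-j)) := by
    ext x; simp only [Finset.mem_Icc, Finset.mem_insert]; omega
  have h2 : Finset.Icc (2:ℤ) (2*(k:ℤ)+2-j) = Finset.Icc (1+1) ((2*(k:ℤ)+2-(j+1))+1) := by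
    congr 1; ring
  rw [h1, Finset.sum_insert (by simp), h2, shift_sum, one_mul]
  rw [← Finset.sum_add_distrib, add_comm]
  congr 1
  apply Finset.sum_congr rfl
  intro n _
  have : j + (n + 1) = j + 1 + n := by ring
  rw [this]; ring

variable (hk : 1 ≤ k)
variable (hc : ∀ i : ℤ, c i =
      if i = 0 then -1
      else if i.natAbs ≤ 2 * k - 1 then (-1 : ℤ) ^ (i.natAbs + 1)
      else if i.natAbs = 2 * k + 1 then -1
      else if i.natAbs = 2 * k + 2 then 1
      else 0)

include hk hc

lemma c_mid (i : ℤ) (h1 : 1 ≤ i) (h2 : i ≤ 2*(k:ℤ)-1) :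
    c i = if i % 2 = 0 then -1 else 1 := by
  rw [hc, if_neg (by omega), if_pos (by omega)]
  have ha : (i.natAbs : ℤ) = i := by omega
  rcases Int.emod_two_eq i with h | h
  · rw [if_pos h]
    have : Odd (i.natAbs + 1) := by rw [Nat.odd_iff]; omega
    exact this.neg_one_pow
  · rw [if_neg (by omega)]
    have : Even (i.natAbs + 1) := by rw [Nat.even_iff]; omega
    exact this.neg_one_pow

lemma main_ind : ∀ j : ℤ, j ≤ 2*(k:ℤ)+2 → 0 ≤ j →
    TTaux k c j = FFaux k j ∧ UUaux k c j = GGaux k j := by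
  have base : TTaux k c (2*(k:ℤ)+2) = FFaux k (2*(k:ℤ)+2) ∧
      UUaux k c (2*(k:ℤ)+2) = GGaux k (2*(k:ℤ)+2) := by
    have he : Finset.Icc (1:ℤ) (2*(k:ℤ)+2 - (2*(k:ℤ)+2)) = ∅ :=
      Finset.Icc_eq_empty (by omega)
    unfold TTaux UUaux FFaux GGaux
    rw [he]
    constructor <;> simp
  intro j hj
  refine Int.le_induction_down
    (motive := fun j _ => 0 ≤ j → TTaux k c j = FFaux k j ∧ UUaux k c j = GGaux k j)
    (fun _ => base) ?_ j hj
  intro n hn ih h0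
  · have ihn := ih (by omega)
    have hT := TT_rec k c (n-1) (by omega)
    have hU := UU_rec k c (n-1) (by omega)
    rw [sub_add_cancel] at hT hU
    rw [ihn.1, ihn.2] at hT
    rw [ihn.2] at hU
    -- evaluate c n
    by_cases e1 : n = 2*(k:ℤ)+2
    · have hcv : c n = 1 := by
        rw [hc, e1]
        rw [if_neg (by omega), if_neg (by omega), if_neg (by omega), if_pos (by omega)]
      rw [hcv] at hT hU
      constructor
      · rw [hT]; unfold FFaux GGaux; split_ifs <;> omega
      · rw [hU]; unfold GGaux; split_ifs <;> omega
    · by_cases e2 : n = 2*(k:ℤ)+1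
      · have hcv : c n = -1 := by
          rw [hc, e2]
          rw [if_neg (by omega), if_neg (by omega), if_pos (by omega)]
        rw [hcv] at hT hU
        constructor
        · rw [hT]; unfold FFaux GGaux; split_ifs <;> omega
        · rw [hU]; unfold GGaux; split_ifs <;> omega
      · by_cases e3 : n = 2*(k:ℤ)
        · have hcv : c n = 0 := by
            rw [hc, e3]
            rw [if_neg (by omega), if_neg (by omega), if_neg (by omega), if_neg (by omega)]
          rw [hcv] at hT hU
          constructor
          · rw [hT]; unfold FFaux GGaux; split_ifs <;> omega
          · rw [hU]; unfold GGaux; split_ifs <;> omega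
        · have hn1 : 1 ≤ n := by omega
          have hn2 : n ≤ 2*(k:ℤ)-1 := by omega
          have hcv := c_mid k c hk hc n hn1 hn2
          rw [hcv] at hT hU
          constructor
          · rw [hT]; unfold FFaux GGaux; split_ifs <;> omega
          · rw [hU]; unfold GGaux; split_ifs <;> omega

end auxP

section auxQ
variable (k : ℕ) (c : ℤ → ℤ)
variable (hk : 1 ≤ k)
variable (hc : ∀ i : ℤ, c i =
      if i = 0 then -1
      else if i.natAbs ≤ 2 * k - 1 then (-1 : ℤ) ^ (i.natAbs + 1)
      else if i.natAbs = 2 * k + 1 then -1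
      else if i.natAbs = 2 * k + 2 then 1
      else 0)
include hc

lemma finsum_to_TT (j : ℤ) (hj : 0 ≤ j) :
    ∑ᶠ n ∈ {n : ℤ | 1 ≤ n}, n * c (j + n) =
      ∑ n ∈ Finset.Icc (1:ℤ) (2*(k:ℤ)+2 - j), n * c (j + n) := by
  apply finsum_mem_eq_sum_of_subset
  · rintro n ⟨hn1, hn2⟩
    simp only [Set.mem_setOf_eq] at hn1
    simp only [Finset.coe_Icc, Set.mem_Icc]
    refine ⟨hn1, ?_⟩
    by_contra hcon
    push_neg at hcon
    apply hn2
    simp only [Function.mem_support, ne_eq, not_not]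
    have : c (j + n) = 0 := by
      rw [hc]
      rw [if_neg (by omega), if_neg (by omega), if_neg (by omega), if_neg (by omega)]
    rw [this, mul_zero]
  · intro n hn
    simp only [Finset.coe_Icc, Set.mem_Icc] at hn
    exact hn.1
end auxQ


theorem pretzel_4k1_torsion_coefficients (k : ℕ) (hk : 1 ≤ k) (c : ℤ → ℤ)
    (hc : ∀ i : ℤ, c i =
      if i = 0 then -1
      else if i.natAbs ≤ 2 * k - 1 then (-1 : ℤ) ^ (i.natAbs + 1)
      else if i.natAbs = 2 * k + 1 then -1
      else if i.natAbs = 2 * k + 2 then 1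
      else 0)
    (t : ℤ → ℤ)
    (ht : ∀ j : ℤ, t j = ∑ᶠ n ∈ {n : ℤ | 1 ≤ n}, n * c (j + n)) :
    ∀ j : ℤ, 0 ≤ j →
      ((j ≤ 2 * k → t j = k + 1 - ⌊((j : ℚ) + 1) / 2⌋) ∧
       (j = 2 * k + 1 → t j = 1) ∧
       (2 * k + 2 ≤ j → t j = 0)) := by
  intro j hj
  have hTT : t j = TTaux k c j := by
    rw [ht j, finsum_to_TT k c hc j hj]; rfl
  have hfloor : ⌊((j:ℚ)+1)/2⌋ = (j+1)/2 := by
    rw [show ((j:ℚ)+1)/2 = ((j+1 : ℤ):ℚ)/((2:ℕ):ℚ) by push_cast; ring]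
    exact Rat.floor_intCast_div_natCast _ _
  refine ⟨?_, ?_, ?_⟩
  · intro hle
    have h1 := (main_ind k c hk hc j (by omega) hj).1
    rw [hTT, h1, hfloor]
    unfold FFaux
    rw [if_neg (by omega), if_neg (by omega)]
  · intro he
    have h1 := (main_ind k c hk hc j (by omega) hj).1
    rw [hTT, h1]
    unfold FFaux
    rw [if_pos (by omega)]
  · intro hge
    rw [hTT]
    unfold TTaux
    rw [Finset.Icc_eq_empty (by omega), Finset.sum_empty]
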